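/- Consider a single arc as in the context, and assume in addition that there is ν⁺ ≥ ε with f⁺(θ) ≤ ν⁺ for all θ. Then the waiting time function q is Lipschitz continuous on [0,∞) with Lipschitz constant max{(ν⁺ − ε)/ε, 1}, and consequently the exit time function T(θ) = θ + τ + q(θ) is Lipschitz continuous as well. -/

import Mathlib

open MeasureTheory
open scoped Classical

noncomputable section

/-- Cumulative flow `F(θ) = ∫₀^θ f` (which vanishes for `θ < 0` whenever `f`
vanishes on negatives). -/
def Fcum (f : ℝ → ℝ) (θ : ℝ) : ℝ := ∫ ξ in (0:ℝ)..θ, f ξ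

/-- The queue `z(θ) = F⁺(θ − τ) − F⁻(θ)`. -/
def queueLen (τ : ℝ) (fplus fminus : ℝ → ℝ) (θ : ℝ) : ℝ :=
  Fcum fplus (θ - τ) - Fcum fminus θ

/-- A single arc of a feasible flow over time: transit time `τ ≥ 0`, outflow
capacity `ν > 0`, inflow rate `fplus` and outflow rate `fminus` (locally integrable,
bounded, nonnegative, vanishing on negative times) with `fminus ≤ ν`, nonnegative
queues, and a lower bound `ε > 0` for the outflow rate whenever the queue is
positive (so that the waiting time is well-defined). -/
structure Arc where
  τ : ℝ
  ν : ℝ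
  ε : ℝ
  fplus : ℝ → ℝ
  fminus : ℝ → ℝ
  τ_nonneg : 0 ≤ τ
  ν_pos : 0 < ν
  ε_pos : 0 < ε
  fplus_nonneg : ∀ θ, 0 ≤ fplus θ
  fminus_nonneg : ∀ θ, 0 ≤ fminus θ
  fplus_zero_neg : ∀ θ, θ < 0 → fplus θ = 0
  fminus_zero_neg : ∀ θ, θ < 0 → fminus θ = 0
  fplus_bdd : ∃ M, ∀ θ, fplus θ ≤ M
  fplus_li : LocallyIntegrable fplus
  fminus_li : LocallyIntegrable fminus
  fminus_le_cap : ∀ θ, fminus θ ≤ ν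
  queue_nonneg : ∀ θ, 0 ≤ θ → 0 ≤ queueLen τ fplus fminus θ
  outflow_lb : ∀ θ, 0 < queueLen τ fplus fminus θ → ε ≤ fminus θ

namespace Arc

/-- Cumulative inflow `F⁺`. -/
def Fplus (A : Arc) (θ : ℝ) : ℝ := Fcum A.fplus θ

/-- Cumulative outflow `F⁻`. -/
def Fminus (A : Arc) (θ : ℝ) : ℝ := Fcum A.fminus θ

/-- The queue `z`. -/
def z (A : Arc) (θ : ℝ) : ℝ := queueLen A.τ A.fplus A.fminus θ

/-- The waiting time `q(θ)`. -/
def q (A : Arc) (θ : ℝ) : ℝ :=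
  sInf {q : ℝ | 0 ≤ q ∧
    (∫ ξ in (θ + A.τ)..(θ + A.τ + q), A.fminus ξ) = A.z (θ + A.τ)}

/-- The exit time `T(θ) = θ + τ + q(θ)`. -/
def T (A : Arc) (θ : ℝ) : ℝ := θ + A.τ + A.q θ

end Arc

end

noncomputable section AuxProofs

namespace Arc

variable (A : Arc)

lemma fminus_ii (a b : ℝ) : IntervalIntegrable A.fminus volume a b :=
  (A.fminus_li.integrableOn_isCompact isCompact_uIcc).intervalIntegrable

lemma fplus_ii (a b : ℝ) : IntervalIntegrable A.fplus volume a b :=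
  (A.fplus_li.integrableOn_isCompact isCompact_uIcc).intervalIntegrable

lemma Fminus_sub (a b : ℝ) : A.Fminus b - A.Fminus a = ∫ x in a..b, A.fminus x := by
  have h := intervalIntegral.integral_add_adjacent_intervals (A.fminus_ii 0 a) (A.fminus_ii a b)
  simp only [Arc.Fminus, Fcum]
  linarith

lemma Fplus_sub (a b : ℝ) : A.Fplus b - A.Fplus a = ∫ x in a..b, A.fplus x := by
  have h := intervalIntegral.integral_add_adjacent_intervals (A.fplus_ii 0 a) (A.fplus_ii a b)
  simp only [Arc.Fplus, Fcum]
  linarith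

lemma Fminus_cont : Continuous A.Fminus := by
  have := intervalIntegral.continuous_primitive (A.fminus_ii) 0
  exact this

lemma Fminus_mono : Monotone A.Fminus := by
  intro a b hab
  have h := A.Fminus_sub a b
  have h2 : 0 ≤ ∫ x in a..b, A.fminus x :=
    intervalIntegral.integral_nonneg hab (fun u _ => A.fminus_nonneg u)
  linarith

lemma Fplus_mono : Monotone A.Fplus := by
  intro a b hab
  have h := A.Fplus_sub a b
  have h2 : 0 ≤ ∫ x in a..b, A.fplus x :=
    intervalIntegral.integral_nonneg hab (fun u _ => A.fplus_nonneg u)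
  linarith

lemma Fminus_lb {a b : ℝ} (hab : a ≤ b) (h : ∀ t ∈ Set.Ioc a b, A.ε ≤ A.fminus t) :
    A.Fminus a + A.ε * (b - a) ≤ A.Fminus b := by
  have h1 : A.Fminus b - A.Fminus a = ∫ x in Set.Ioc a b, A.fminus x := by
    rw [A.Fminus_sub, intervalIntegral.integral_of_le hab]
  have hconst : IntegrableOn (fun _ : ℝ => A.ε) (Set.Ioc a b) volume :=
    integrableOn_const measure_Ioc_lt_top.ne
  have h2 := setIntegral_mono_on hconst (A.fminus_ii a b).1 measurableSet_Ioc h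
  rw [setIntegral_const, measureReal_def, Real.volume_Ioc, ENNReal.toReal_ofReal (by linarith)] at h2
  simp only [smul_eq_mul] at h2
  nlinarith

lemma Fplus_ub {M : ℝ} (hcap : ∀ t, A.fplus t ≤ M) {a b : ℝ} (hab : a ≤ b) :
    A.Fplus b - A.Fplus a ≤ M * (b - a) := by
  rw [A.Fplus_sub]
  have h := intervalIntegral.integral_mono_on hab (A.fplus_ii a b)
    (intervalIntegrable_const (c := M)) (fun x _ => hcap x)
  rw [intervalIntegral.integral_const, smul_eq_mul] at h
  nlinarith

lemma queue_eq (t : ℝ) :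
    queueLen A.τ A.fplus A.fminus t = A.Fplus (t - A.τ) - A.Fminus t := rfl

lemma Fminus_le_Fplus (t : ℝ) (ht : 0 ≤ t) : A.Fminus t ≤ A.Fplus (t - A.τ) := by
  have h := A.queue_nonneg t ht
  rw [A.queue_eq] at h
  linarith

lemma q_eq (θ : ℝ) :
    A.q θ = sInf {s : ℝ | 0 ≤ s ∧ A.Fminus (θ + A.τ + s) = A.Fplus θ} := by
  unfold Arc.q
  congr 1
  ext s
  have h1 : (∫ ξ in (θ + A.τ)..(θ + A.τ + s), A.fminus ξ)
      = A.Fminus (θ + A.τ + s) - A.Fminus (θ + A.τ) := (A.Fminus_sub _ _).symm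
  have h2 : A.z (θ + A.τ) = A.Fplus θ - A.Fminus (θ + A.τ) := by
    show queueLen A.τ A.fplus A.fminus (θ + A.τ) = _
    rw [A.queue_eq]
    congr 2
    ring
  constructor
  · rintro ⟨hs, he⟩
    rw [h1, h2] at he
    exact ⟨hs, by linarith⟩
  · rintro ⟨hs, he⟩
    refine ⟨hs, ?_⟩
    rw [h1, h2, he]

lemma exists_hit (θ : ℝ) (hθ : 0 ≤ θ) (c : ℝ) (hc : θ + A.τ ≤ c) :
    ∃ t, θ + A.τ ≤ t ∧ t ≤ c + max (A.Fplus θ - A.Fminus c) 0 / A.ε ∧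
      A.Fminus t = A.Fplus θ := by
  have hε := A.ε_pos
  set D := max (A.Fplus θ - A.Fminus c) 0 with hD
  have hD0 : 0 ≤ D := le_max_right _ _
  have hDge : A.Fplus θ - A.Fminus c ≤ D := le_max_left _ _
  set b := c + D / A.ε with hb
  have hcb : c ≤ b := le_add_of_nonneg_right (div_nonneg hD0 hε.le)
  have key : A.Fplus θ ≤ A.Fminus b := by
    by_contra hlt
    push_neg at hlt
    have hub : ∀ t ∈ Set.Ioc c b, A.ε ≤ A.fminus t := by
      intro t ht
      apply A.outflow_lb
      rw [A.queue_eq]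
      have hm1 : A.Fminus t ≤ A.Fminus b := A.Fminus_mono ht.2
      have hm2 : A.Fplus θ ≤ A.Fplus (t - A.τ) := by
        apply A.Fplus_mono
        have := ht.1
        have := A.τ_nonneg
        linarith
      linarith
    have hlb := A.Fminus_lb hcb hub
    have hbc : A.ε * (b - c) = D := by
      rw [hb]
      field_simp
      ring
    linarith
  have h0 : A.Fminus (θ + A.τ) ≤ A.Fplus θ := by
    have := A.Fminus_le_Fplus (θ + A.τ) (by linarith [A.τ_nonneg])
    simpa using this
  have hab : θ + A.τ ≤ b := le_trans hc hcb
  have hiv := intermediate_value_Icc hab (A.Fminus_cont.continuousOn)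
  obtain ⟨t, ht, hft⟩ := hiv ⟨h0, key⟩
  exact ⟨t, ht.1, ht.2, hft⟩

lemma q_spec (θ : ℝ) (hθ : 0 ≤ θ) :
    0 ≤ A.q θ ∧ A.Fminus (θ + A.τ + A.q θ) = A.Fplus θ := by
  rw [A.q_eq]
  set S := {s : ℝ | 0 ≤ s ∧ A.Fminus (θ + A.τ + s) = A.Fplus θ} with hS
  have hne : S.Nonempty := by
    obtain ⟨t, h1, _h2, h3⟩ := A.exists_hit θ hθ (θ + A.τ) le_rfl
    refine ⟨t - (θ + A.τ), by linarith, ?_⟩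
    rw [show θ + A.τ + (t - (θ + A.τ)) = t by ring]
    exact h3
  have hbdd : BddBelow S := ⟨0, fun s hs => hs.1⟩
  have hcl : IsClosed S := by
    have heq : S = Set.Ici (0:ℝ) ∩ (fun s => A.Fminus (θ + A.τ + s)) ⁻¹' {A.Fplus θ} := by
      ext s
      simp [hS, Set.mem_Ici]
    rw [heq]
    exact isClosed_Ici.inter (isClosed_singleton.preimage
      (A.Fminus_cont.comp (continuous_const.add continuous_id)))
  exact hcl.csInf_mem hne hbdd

lemma q_le' (θ : ℝ) (t : ℝ) (h1 : θ + A.τ ≤ t) (h2 : A.Fminus t = A.Fplus θ) :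
    A.q θ ≤ t - (θ + A.τ) := by
  rw [A.q_eq]
  refine csInf_le ⟨0, fun s hs => hs.1⟩ ⟨by linarith, ?_⟩
  rw [show θ + A.τ + (t - (θ + A.τ)) = t by ring]
  exact h2

lemma q_drain (θ : ℝ) (hθ : 0 ≤ θ) (c : ℝ) (hc : θ + A.τ ≤ c) :
    A.q θ ≤ (c - (θ + A.τ)) + max (A.Fplus θ - A.Fminus c) 0 / A.ε := by
  obtain ⟨t, h1, h2, h3⟩ := A.exists_hit θ hθ c hc
  have := A.q_le' θ t h1 h3
  linarith

lemma T_mono {θ₁ θ₂ : ℝ} (h0 : 0 ≤ θ₁) (h12 : θ₁ ≤ θ₂) :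
    θ₁ + A.τ + A.q θ₁ ≤ θ₂ + A.τ + A.q θ₂ := by
  by_contra h
  push_neg at h
  obtain ⟨hq1, hF1⟩ := A.q_spec θ₁ h0
  obtain ⟨hq2, hF2⟩ := A.q_spec θ₂ (le_trans h0 h12)
  have hm1 : A.Fminus (θ₂ + A.τ + A.q θ₂) ≤ A.Fminus (θ₁ + A.τ + A.q θ₁) :=
    A.Fminus_mono h.le
  have hp : A.Fplus θ₁ ≤ A.Fplus θ₂ := A.Fplus_mono h12
  have heq : A.Fminus (θ₂ + A.τ + A.q θ₂) = A.Fplus θ₁ := by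
    rw [hF1] at hm1
    rw [hF2]
    linarith
  have := A.q_le' θ₁ (θ₂ + A.τ + A.q θ₂) (by linarith) heq
  linarith

end Arc

end AuxProofs

/-- **Lipschitz continuity of waiting and exit times.** For a single arc of a
feasible flow over time whose inflow rate is bounded by `ν⁺ ≥ ε`, the waiting time
function `q` is Lipschitz continuous on `[0,∞)` with constant
`max ((ν⁺ − ε)/ε) 1`, and consequently the exit time function `T` is Lipschitz
continuous on `[0,∞)` as well. -/
theorem arc_wait_lipschitz (A : Arc) (νplus : ℝ)
    (hνε : A.ε ≤ νplus) (hcap : ∀ θ, A.fplus θ ≤ νplus) :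
    LipschitzOnWith (Real.toNNReal (max ((νplus - A.ε) / A.ε) 1)) A.q (Set.Ici 0) ∧
    ∃ L : NNReal, LipschitzOnWith L A.T (Set.Ici 0) := by
  have hε := A.ε_pos
  have hτ := A.τ_nonneg
  set K : ℝ := max ((νplus - A.ε) / A.ε) 1 with hKdef
  clear_value K
  have hK1 : 1 ≤ K := by rw [hKdef]; exact le_max_right _ _
  have hKν : νplus - A.ε ≤ A.ε * K := by
    have : (νplus - A.ε) / A.ε ≤ K := by rw [hKdef]; exact le_max_left _ _
    calc νplus - A.ε = A.ε * ((νplus - A.ε) / A.ε) := by field_simp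
      _ ≤ A.ε * K := mul_le_mul_of_nonneg_left this hε.le
  have hν0 : 0 ≤ νplus := le_trans hε.le hνε
  -- main upper estimate
  have main : ∀ θ₁ θ₂, 0 ≤ θ₁ → θ₁ ≤ θ₂ → A.q θ₂ ≤ A.q θ₁ + K * (θ₂ - θ₁) := by
    intro θ₁ θ₂ h0 h12
    set Δ := θ₂ - θ₁ with hΔdef
    clear_value Δ
    have hΔ0 : 0 ≤ Δ := by simp [hΔdef]; linarith
    obtain ⟨hq1, hF1⟩ := A.q_spec θ₁ h0
    obtain ⟨hq2, hF2⟩ := A.q_spec θ₂ (by linarith)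
    have hgrow : A.Fplus θ₂ - A.Fplus θ₁ ≤ νplus * Δ := by
      rw [hΔdef]; exact A.Fplus_ub hcap h12
    by_cases hcase : Δ ≤ A.q θ₁
    · -- start draining at T θ₁
      have hT := A.q_drain θ₂ (by linarith) (θ₁ + A.τ + A.q θ₁) (by simp [hΔdef] at hcase ⊢; linarith)
      rw [hF1] at hT
      have hmax : max (A.Fplus θ₂ - A.Fplus θ₁) 0 ≤ νplus * Δ :=
        max_le hgrow (mul_nonneg hν0 hΔ0)
      have hdiv : max (A.Fplus θ₂ - A.Fplus θ₁) 0 / A.ε ≤ νplus * Δ / A.ε := by gcongr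
      have hrw : θ₁ + A.τ + A.q θ₁ - (θ₂ + A.τ) = A.q θ₁ - Δ := by simp [hΔdef]; ring
      rw [hrw] at hT
      have hfin : νplus * Δ / A.ε ≤ Δ + K * Δ := by
        rw [div_le_iff₀ hε]
        linarith [mul_le_mul_of_nonneg_right hKν hΔ0]
      calc A.q θ₂ ≤ A.q θ₁ - Δ + max (A.Fplus θ₂ - A.Fplus θ₁) 0 / A.ε := hT
        _ ≤ A.q θ₁ - Δ + νplus * Δ / A.ε := by linarith
        _ ≤ A.q θ₁ + K * Δ := by linarith
    · push_neg at hcase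
      set a := θ₁ + A.τ + A.q θ₁ with hadef
      clear_value a
      set b2 := θ₂ + A.τ with hbdef
      clear_value b2
      have hab : a ≤ b2 := by simp [hadef, hbdef]; simp [hΔdef] at hcase; linarith
      have ha0 : 0 ≤ a := by simp [hadef]; linarith
      have hT := A.q_drain θ₂ (by linarith) b2 hbdef.ge
      rw [show b2 - (θ₂ + A.τ) = 0 by simp [hbdef]] at hT
      -- claim : deficit at b2 is small
      have hclaim : A.Fplus θ₂ - A.Fminus b2 ≤ A.ε * A.q θ₁ + A.ε * (K * Δ) := by
        by_cases hz : ∃ t ∈ Set.Icc a b2, A.Fplus (t - A.τ) = A.Fminus t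
        · obtain ⟨t₀, hta, htb, hteq, ht0max⟩ :
              ∃ t₀, a ≤ t₀ ∧ t₀ ≤ b2 ∧ A.Fplus (t₀ - A.τ) = A.Fminus t₀ ∧
                ∀ t, a ≤ t → t ≤ b2 → A.Fplus (t - A.τ) = A.Fminus t → t ≤ t₀ := by
            have hcp : Continuous A.Fplus := by
              have := intervalIntegral.continuous_primitive (A.fplus_ii) 0
              exact this
            have hcont : Continuous fun t => A.Fplus (t - A.τ) - A.Fminus t :=
              (hcp.comp (continuous_id.sub continuous_const)).sub A.Fminus_cont
            have hZeq : {t : ℝ | t ∈ Set.Icc a b2 ∧ A.Fplus (t - A.τ) = A.Fminus t}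
                = Set.Icc a b2 ∩ (fun t => A.Fplus (t - A.τ) - A.Fminus t) ⁻¹' {0} := by
              ext t
              simp only [Set.mem_setOf_eq, Set.mem_inter_iff, Set.mem_preimage,
                Set.mem_singleton_iff]
              constructor
              · rintro ⟨h1, h2⟩; exact ⟨h1, by linarith⟩
              · rintro ⟨h1, h2⟩; exact ⟨h1, by linarith⟩
            have hZcl : IsClosed {t : ℝ | t ∈ Set.Icc a b2 ∧ A.Fplus (t - A.τ) = A.Fminus t} := by
              rw [hZeq]
              exact isClosed_Icc.inter (isClosed_singleton.preimage hcont)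
            have hZcp : IsCompact {t : ℝ | t ∈ Set.Icc a b2 ∧ A.Fplus (t - A.τ) = A.Fminus t} :=
              isCompact_Icc.of_isClosed_subset hZcl (fun t ht => ht.1)
            have hZne : {t : ℝ | t ∈ Set.Icc a b2 ∧ A.Fplus (t - A.τ) = A.Fminus t}.Nonempty := by
              obtain ⟨t, ht1, ht2⟩ := hz
              exact ⟨t, ht1, ht2⟩
            have hmem := hZcp.sSup_mem hZne
            refine ⟨sSup {t : ℝ | t ∈ Set.Icc a b2 ∧ A.Fplus (t - A.τ) = A.Fminus t},
              hmem.1.1, hmem.1.2, hmem.2, ?_⟩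
            intro t h1 h2 h3
            exact le_csSup hZcp.bddAbove ⟨⟨h1, h2⟩, h3⟩
          have hpos : ∀ t ∈ Set.Ioc t₀ b2, A.ε ≤ A.fminus t := by
            intro t ht
            apply A.outflow_lb
            rw [A.queue_eq]
            have ht1 : a ≤ t := le_trans hta ht.1.le
            have hne : A.Fplus (t - A.τ) ≠ A.Fminus t := by
              intro h
              have hle : t ≤ t₀ := ht0max t ht1 ht.2 h
              exact absurd hle (not_le.2 ht.1)
            have hge := A.Fminus_le_Fplus t (by linarith)
            cases lt_or_eq_of_le hge with
            | inl h => linarith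
            | inr h => exact absurd h.symm hne
          have hlb := A.Fminus_lb (le_trans (le_refl t₀) htb) hpos
          have hup : A.Fplus θ₂ - A.Fplus (t₀ - A.τ) ≤ νplus * (θ₂ - (t₀ - A.τ)) :=
            A.Fplus_ub hcap (by simp [hbdef] at htb; linarith)
          have hb2t : b2 - t₀ ≤ Δ := by
            simp [hbdef, hΔdef]
            have : θ₁ + A.τ ≤ t₀ := by simp [hadef] at hta; linarith
            linarith
          have hb2t0 : 0 ≤ b2 - t₀ := by linarith
          have hstep : A.Fplus θ₂ - A.Fminus b2 ≤ (νplus - A.ε) * (b2 - t₀) := by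
            have hrw : θ₂ - (t₀ - A.τ) = b2 - t₀ := by simp [hbdef]; ring
            rw [hrw] at hup
            linarith [hteq]
          calc A.Fplus θ₂ - A.Fminus b2 ≤ (νplus - A.ε) * (b2 - t₀) := hstep
            _ ≤ (νplus - A.ε) * Δ :=
              mul_le_mul_of_nonneg_left hb2t (by linarith)
            _ ≤ A.ε * (K * Δ) := by
              linarith [mul_le_mul_of_nonneg_right hKν hΔ0]
            _ ≤ A.ε * A.q θ₁ + A.ε * (K * Δ) := by
              linarith [mul_nonneg hε.le hq1]
        · push_neg at hz
          have hpos : ∀ t ∈ Set.Ioc a b2, A.ε ≤ A.fminus t := by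
            intro t ht
            apply A.outflow_lb
            rw [A.queue_eq]
            have htmem : t ∈ Set.Icc a b2 := ⟨ht.1.le, ht.2⟩
            have hne := hz t htmem
            have hge := A.Fminus_le_Fplus t (by linarith [htmem.1])
            cases lt_or_eq_of_le hge with
            | inl h => linarith
            | inr h => exact absurd h.symm hne
          have hlb := A.Fminus_lb hab hpos
          rw [hF1] at hlb
          have hba : b2 - a = Δ - A.q θ₁ := by simp [hadef, hbdef, hΔdef]; ring
          rw [hba] at hlb
          linarith [mul_le_mul_of_nonneg_right hKν hΔ0]
      have hmax : max (A.Fplus θ₂ - A.Fminus b2) 0 ≤ A.ε * A.q θ₁ + A.ε * (K * Δ) :=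
        max_le hclaim (by
          have h1 := mul_nonneg hε.le hq1
          have h2 := mul_nonneg hε.le (mul_nonneg (by linarith : (0:ℝ) ≤ K) hΔ0)
          linarith)
      have hdiv : max (A.Fplus θ₂ - A.Fminus b2) 0 / A.ε
          ≤ (A.ε * A.q θ₁ + A.ε * (K * Δ)) / A.ε := by gcongr
      have heq : (A.ε * A.q θ₁ + A.ε * (K * Δ)) / A.ε = A.q θ₁ + K * Δ := by
        field_simp
      rw [heq] at hdiv
      linarith
  -- lower estimate from monotonicity of T
  have lower : ∀ θ₁ θ₂, 0 ≤ θ₁ → θ₁ ≤ θ₂ → A.q θ₁ - A.q θ₂ ≤ K * (θ₂ - θ₁) := by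
    intro θ₁ θ₂ h0 h12
    have hm := A.T_mono h0 h12
    have hprod : 0 ≤ (K - 1) * (θ₂ - θ₁) :=
      mul_nonneg (by linarith) (by linarith)
    nlinarith
  have hK0 : 0 ≤ K := le_trans zero_le_one hK1
  have hcoe : ((Real.toNNReal K : NNReal) : ℝ) = K := Real.coe_toNNReal _ hK0
  have hqd : ∀ x y, 0 ≤ x → 0 ≤ y → |A.q x - A.q y| ≤ K * |x - y| := by
    intro x y hx hy
    rcases le_total x y with h | h
    · rw [abs_sub_comm x y, abs_of_nonneg (sub_nonneg.2 h), abs_sub_le_iff]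
      have h1 := main x y hx h
      have h2 := lower x y hx h
      constructor <;> linarith
    · rw [abs_of_nonneg (sub_nonneg.2 h), abs_sub_le_iff]
      have h1 := main y x hy h
      have h2 := lower y x hy h
      constructor <;> linarith
  have hqlip : LipschitzOnWith (Real.toNNReal K) A.q (Set.Ici 0) := by
    rw [lipschitzOnWith_iff_dist_le_mul]
    intro x hx y hy
    rw [Real.dist_eq, Real.dist_eq, hcoe]
    exact hqd x y hx hy
  refine ⟨hqlip, ⟨Real.toNNReal K + 1, ?_⟩⟩
  rw [lipschitzOnWith_iff_dist_le_mul]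
  intro x hx y hy
  have hcoe2 : ((Real.toNNReal K + 1 : NNReal) : ℝ) = K + 1 := by
    push_cast [hcoe]
    ring
  rw [Real.dist_eq, Real.dist_eq, hcoe2]
  have h2 := hqd x y hx hy
  have hTd : A.T x - A.T y = (x - y) + (A.q x - A.q y) := by
    simp only [Arc.T]
    ring
  rw [hTd]
  calc |(x - y) + (A.q x - A.q y)| ≤ |x - y| + |A.q x - A.q y| := abs_add_le _ _
    _ ≤ |x - y| + K * |x - y| := by linarith
    _ = (K + 1) * |x - y| := by ring
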